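/- Let n > 1 and let k be an integer with 4 ≤ k < z_1(n). Then z_1(n − k) ≤ 2k − 2. -/

import Mathlib

/-- `IsZeck n l` says that `l` is the Zeckendorf representation of `n`, recorded as the
list of indices of the Fibonacci parts in increasing order: every index is at least `2`,
consecutive indices differ by at least `2` (no two consecutive Fibonacci numbers), and the
corresponding Fibonacci numbers sum to `n`.  The parts of the Zeckendorf representation in
increasing order are then `z₁(n) = Nat.fib l.headI`, `z₂(n) = Nat.fib (l.getD 1 0)`, etc. -/
def IsZeck (n : ℕ) (l : List ℕ) : Prop :=
  (∀ i ∈ l, 2 ≤ i) ∧ l.Chain' (fun a b => a + 2 ≤ b) ∧ (l.map Nat.fib).sum = n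

local instance : IsTrans ℕ (fun a b => a + 2 ≤ b) where
  trans _ _ _ h1 h2 := by omega

local instance : IsTrans ℕ (fun a b => b + 2 ≤ a) where
  trans _ _ _ h1 h2 := by omega

lemma isZeck_iff (n : ℕ) (l : List ℕ) :
    IsZeck n l ↔ l.reverse.IsZeckendorfRep ∧ (l.map Nat.fib).sum = n := by
  have h1 : l.reverse ++ [0] = (0 :: l).reverse := by simp
  rw [IsZeck, List.IsZeckendorfRep, h1, List.isChain_reverse]
  have h2 : (0 :: l).Chain' (fun a b => a + 2 ≤ b) ↔
      (∀ i ∈ l, 2 ≤ i) ∧ l.Chain' (fun a b => a + 2 ≤ b) := by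
    unfold List.Chain'
    rw [List.isChain_iff_pairwise, List.pairwise_cons, ← List.isChain_iff_pairwise]
  constructor
  · rintro ⟨ha, hb, hc⟩
    exact ⟨h2.2 ⟨ha, hb⟩, hc⟩
  · rintro ⟨ha, hc⟩
    have := h2.1 ha
    exact ⟨this.1, this.2, hc⟩

lemma isZeck_unique {n : ℕ} {l l' : List ℕ} (h : IsZeck n l) (h' : IsZeck n l') : l = l' := by
  rw [isZeck_iff] at h h'
  have e1 := Nat.zeckendorf_sum_fib h.1
  have e2 := Nat.zeckendorf_sum_fib h'.1
  rw [List.map_reverse, List.sum_reverse, h.2] at e1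
  rw [List.map_reverse, List.sum_reverse, h'.2] at e2
  have : l.reverse = l'.reverse := by rw [← e1, ← e2]
  simpa using congrArg List.reverse this

lemma isZeck_zeckendorf (d : ℕ) : IsZeck d (Nat.zeckendorf d).reverse := by
  rw [isZeck_iff, List.reverse_reverse, List.map_reverse, List.sum_reverse]
  exact ⟨Nat.isZeckendorfRep_zeckendorf d, Nat.sum_zeckendorf_fib d⟩

/-- sum bound for an increasing Zeckendorf-type chain whose entries are all `< a`. -/
lemma sum_fib_add_fib_le : ∀ (t : List ℕ) (b a : ℕ),
    (b :: t).Chain' (fun x y => x + 2 ≤ y) → (∀ i ∈ b :: t, i < a) →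
    ((b :: t).map Nat.fib).sum + Nat.fib (b - 1) ≤ Nat.fib a
  | [], b, a, _, hlt => by
    have hba : b + 1 ≤ a := hlt b (by simp)
    have h1 : Nat.fib b + Nat.fib (b - 1) ≤ Nat.fib (b + 1) := by
      rcases b with _ | b
      · simp
      · rw [Nat.fib_add_one (Nat.succ_ne_zero b)]; simp [Nat.add_comm]
    simpa using h1.trans (Nat.fib_mono hba)
  | c :: t, b, a, hch, hlt => by
    unfold List.Chain' at hch
    rw [List.isChain_cons_cons] at hch
    have IH := sum_fib_add_fib_le t c a hch.2 (fun i hi => hlt i (List.mem_cons_of_mem _ hi))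
    have hbc : b + 2 ≤ c := hch.1
    have h1 : Nat.fib b + Nat.fib (b - 1) ≤ Nat.fib (b + 1) := by
      rcases b with _ | b
      · simp
      · rw [Nat.fib_add_one (Nat.succ_ne_zero b)]; simp [Nat.add_comm]
    have h2 : Nat.fib (b + 1) ≤ Nat.fib (c - 1) := Nat.fib_mono (by omega)
    have h3 : Nat.fib (c - 1) + ((c :: t).map Nat.fib).sum ≤ Nat.fib a := by
      have := IH; omega
    simp only [List.map_cons, List.sum_cons] at h3 IH ⊢
    omega

/-- Let `n > 1` and let `k` be an integer with `4 ≤ k < z₁(n)`.  Then `z₁(n - k) ≤ 2k - 2`. -/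
theorem z1_sub_le_two_mul_sub_two (n k : ℕ) (ln lm : List ℕ)
    (hln : IsZeck n ln) (hlm : IsZeck (n - k) lm)
    (hn : 1 < n) (hk1 : 4 ≤ k) (hk2 : k < Nat.fib ln.headI) :
    Nat.fib lm.headI ≤ 2 * k - 2 := by
  obtain ⟨hln2, hlnc, hlns⟩ := hln
  -- ln is nonempty
  obtain ⟨a, t, rfl⟩ : ∃ a t, ln = a :: t := by
    cases ln with
    | nil => simp at hlns; omega
    | cons a t => exact ⟨a, t, rfl⟩
  simp only [List.headI] at hk2
  simp only [List.map_cons, List.sum_cons] at hlns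
  set S := (t.map Nat.fib).sum with hS
  have hka : k ≤ Nat.fib a := hk2.le
  set d : ℕ := Nat.fib a - k with hd
  have hdpos : 0 < d := by omega
  have hda : d < Nat.fib a := by omega
  -- the Zeckendorf representation of d
  set ld : List ℕ := Nat.zeckendorf d with hld
  have hldz : IsZeck d ld.reverse := isZeck_zeckendorf d
  have hldne : ld ≠ [] := by
    rw [hld, Nat.zeckendorf_of_pos hdpos]; simp
  -- every element of ld is at most greatestFib d < a
  have hmemlt : ∀ i ∈ ld.reverse, i < a := by
    intro i hi
    rw [List.mem_reverse] at hi
    have hgf : Nat.greatestFib d < a := Nat.greatestFib_lt.2 hda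
    rw [hld, Nat.zeckendorf_of_pos hdpos] at hi
    rcases List.mem_cons.1 hi with rfl | hi'
    · exact hgf
    · -- elements of the tail are < head by the decreasing chain
      have hrep := Nat.isZeckendorfRep_zeckendorf d
      rw [List.IsZeckendorfRep, Nat.zeckendorf_of_pos hdpos] at hrep
      rw [List.cons_append, List.isChain_iff_pairwise, List.pairwise_cons] at hrep
      have := hrep.1 i (by simp [hi'])
      omega
  -- build the Zeckendorf rep of n - k
  have hjoin : IsZeck (n - k) (ld.reverse ++ t) := by
    obtain ⟨h2, hch, hsum⟩ := hldz
    refine ⟨?_, ?_, ?_⟩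
    · intro i hi
      rcases List.mem_append.1 hi with h | h
      · exact h2 i h
      · exact hln2 i (List.mem_cons_of_mem _ h)
    · unfold List.Chain'
      rw [List.isChain_append]
      refine ⟨hch, (List.isChain_cons.1 hlnc).2, ?_⟩
      intro x hx y hy
      have hxa : x < a := hmemlt x (List.mem_of_mem_getLast? hx)
      have hay : a + 2 ≤ y := (List.isChain_cons.1 hlnc).1 y hy
      omega
    · rw [List.map_append, List.sum_append, hsum]
      omega
  have heq : lm = ld.reverse ++ t := isZeck_unique hlm hjoin
  -- get the head b of lm
  obtain ⟨b, r, hbr⟩ : ∃ b r, ld.reverse = b :: r := by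
    cases h : ld.reverse with
    | nil => exact absurd (by simpa using h) hldne
    | cons b r => exact ⟨b, r, rfl⟩
  have hhead : lm.headI = b := by rw [heq, hbr]; rfl
  -- the key bound : fib (b - 1) ≤ k
  have hbound : d + Nat.fib (b - 1) ≤ Nat.fib a := by
    have hch : (b :: r).Chain' (fun x y => x + 2 ≤ y) := by rw [← hbr]; exact hldz.2.1
    have hlt : ∀ i ∈ b :: r, i < a := by rw [← hbr]; exact hmemlt
    have := sum_fib_add_fib_le r b a hch hlt
    rw [← hbr] at this
    rcases hldz with ⟨-, -, hsum⟩
    omega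
  have hfk : Nat.fib (b - 1) ≤ k := by omega
  -- conclude
  rw [hhead]
  by_cases hb5 : b ≤ 5
  · have : Nat.fib b ≤ Nat.fib 5 := Nat.fib_mono hb5
    simp [Nat.fib] at this ⊢
    omega
  · obtain ⟨c, rfl⟩ : ∃ c, b = c + 6 := ⟨b - 6, by omega⟩
    have e1 : Nat.fib (c + 6) = Nat.fib (c + 4) + Nat.fib (c + 5) := Nat.fib_add_two
    have e2 : Nat.fib (c + 5) = Nat.fib (c + 3) + Nat.fib (c + 4) := Nat.fib_add_two
    have e3 : 2 ≤ Nat.fib (c + 3) := by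
      have : Nat.fib 3 ≤ Nat.fib (c + 3) := Nat.fib_mono (by omega)
      simpa [Nat.fib] using this
    have hb1 : (c + 6 : ℕ) - 1 = c + 5 := by omega
    rw [hb1] at hfk
    omega
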